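/- Let p be a real polynomial of degree n ≥ 2 with only real zeroes and d ≥ 2 distinct zeroes, and let μ₁ < ⋯ < μ_{d−1} be the zeroes of p' that are not zeroes of p. Then p(μⱼ)·p''(μⱼ) < 0 for each j = 1,…,d−1. -/

import Mathlib

open Polynomial

lemma de_gua_aux (x : ℝ) (S : Multiset ℝ) (hx : ∀ a ∈ S, x ≠ a) :
    (derivative (S.map fun a => X - C a).prod).eval x
        = ((S.map fun a => X - C a).prod).eval x * (S.map fun a => (x - a)⁻¹).sum ∧
    (derivative (derivative (S.map fun a => X - C a).prod)).eval x
        = ((S.map fun a => X - C a).prod).eval x *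
          ((S.map fun a => (x - a)⁻¹).sum ^ 2 - (S.map fun a => ((x - a) ^ 2)⁻¹).sum) := by
  induction S using Multiset.induction with
  | empty => simp
  | cons a s ih =>
    have hu : x - a ≠ 0 := sub_ne_zero.2 (hx a (Multiset.mem_cons_self a s))
    obtain ⟨ih1, ih2⟩ := ih fun b hb => hx b (Multiset.mem_cons_of_mem hb)
    simp only [Multiset.map_cons, Multiset.prod_cons, Multiset.sum_cons, derivative_mul,
      derivative_add, derivative_sub, derivative_X, derivative_C, sub_zero, one_mul,
      derivative_one, eval_add, eval_mul, eval_sub, eval_X, eval_C, eval_one, zero_mul,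
      zero_add, ih1, ih2]
    constructor
    · field_simp
    · field_simp
      ring

/-- Let `p` be a real polynomial of degree `n ≥ 2` with only real zeroes and at
least two distinct zeroes. If `μ` is a zero of `p'` which is not a zero of `p`,
then `p(μ)·p''(μ) < 0`. -/
theorem de_gua_critical_points (p : ℝ[X]) (n : ℕ) (hn : p.natDegree = n) (hn2 : 2 ≤ n)
    (hreal : ∀ z : ℂ, (p.map (algebraMap ℝ ℂ)).IsRoot z → z.im = 0)
    (hdist : ∃ x y : ℝ, x ≠ y ∧ p.IsRoot x ∧ p.IsRoot y) :
    ∀ μ : ℝ, (derivative p).eval μ = 0 → p.eval μ ≠ 0 →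
      p.eval μ * (derivative (derivative p)).eval μ < 0 := by
  have hp0 : p ≠ 0 := by
    intro h; rw [h] at hn; simp at hn; omega
  have hsplits : p.Splits := by
    apply Splits.of_splits_map (algebraMap ℝ ℂ) (IsAlgClosed.splits _)
    intro z hz
    have him : z.im = 0 := hreal z ((mem_roots (by
      simpa using (Polynomial.map_ne_zero_iff (algebraMap ℝ ℂ).injective).2 hp0)).1 hz)
    exact ⟨z.re, by simpa [Complex.ext_iff, him] using rfl⟩
  have hcard : p.roots.card = p.natDegree := splits_iff_card_roots.1 hsplits
  have hfac : p = C p.leadingCoeff * (p.roots.map fun a => X - C a).prod :=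
    (C_leadingCoeff_mul_prod_multiset_X_sub_C hcard).symm
  intro μ hd hpμ
  have hxroots : ∀ a ∈ p.roots, μ ≠ a := by
    intro a ha heq
    exact hpμ (heq ▸ (isRoot_of_mem_roots ha))
  obtain ⟨h1, h2⟩ := de_gua_aux μ p.roots hxroots
  set A := (p.roots.map fun a => (μ - a)⁻¹).sum with hA
  set B := (p.roots.map fun a => ((μ - a) ^ 2)⁻¹).sum with hB
  set E := ((p.roots.map fun a => X - C a).prod).eval μ with hE
  have hpe : p.eval μ = p.leadingCoeff * E := by
    conv_lhs => rw [hfac]; simp [hE]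
  have hd1 : (derivative p).eval μ = p.leadingCoeff * (E * A) := by
    conv_lhs => rw [hfac]
    simp [h1]
  have hd2 : (derivative (derivative p)).eval μ = p.leadingCoeff * (E * (A ^ 2 - B)) := by
    conv_lhs => rw [hfac]
    simp [h2]
  have hEne : p.leadingCoeff * E ≠ 0 := hpe ▸ hpμ
  have hA0 : A = 0 := by
    rw [hd1] at hd
    rcases mul_eq_zero.1 hd with h | h
    · exact absurd (by simp [h]) hEne
    · rcases mul_eq_zero.1 h with h' | h'
      · exact absurd (by simp [h']) hEne
      · exact h'
  have hroots_ne : p.roots ≠ 0 := by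
    intro h
    rw [h] at hcard; simp [hn] at hcard; omega
  obtain ⟨a0, ha0⟩ := Multiset.exists_mem_of_ne_zero hroots_ne
  have hBpos : 0 < B := by
    have h1 : ((μ - a0) ^ 2)⁻¹ ≤ B := by
      apply Multiset.single_le_sum
      · intro b hb
        obtain ⟨a, ha, rfl⟩ := Multiset.mem_map.1 hb
        positivity
      · exact Multiset.mem_map.2 ⟨a0, ha0, rfl⟩
    have h2 : (0:ℝ) < ((μ - a0) ^ 2)⁻¹ := by
      have := sub_ne_zero.2 (hxroots a0 ha0)
      positivity
    linarith
  have : p.eval μ * (derivative (derivative p)).eval μ = -(p.eval μ) ^ 2 * B := by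
    rw [hd2, hpe, hA0]
    ring
  rw [this]
  have : (0:ℝ) < p.eval μ ^ 2 := by positivity
  nlinarith
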